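/- Let γ ∈ (0,1), and let p_T be geometric with parameter 1−γ. If the variational distribution over termination time equals the prior (q_T = p_T) and the action prior is uniform on a finite action set A, then the outcome-driven Q-recursion Q(s,a) = (1−γ) log ℓ(s,a) + γ E_{s'∼p(·|s,a)}[ E_{a'∼π(·|s')}[Q(s',a')] + H(π(·|s')) ] − γ log|A| coincides, up to the constant −γ log |A|/(1−γ) added to Q and rescaling of the reward by (1−γ), with the entropy-regularized (soft) Bellman recursion with reward r(s,a) = log ℓ(s,a) and discount γ. -/

import Mathlib

/-- with a geometric termination prior (`q_T = p_T`, parameter `1−γ`)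
and a uniform action prior on a finite action set `A`, the outcome-driven
Q-recursion, after adding the constant `γ log|A|/(1−γ)` to `Q`, satisfies the
entropy-regularized (soft) Bellman recursion with reward `(1−γ) log ℓ(s,a)`
and discount `γ`. -/
theorem outcome_driven_reduces_to_soft_bellman
    (S A : Type) [Fintype S] [Fintype A] [Nonempty A]
    (γ : ℝ) (hγ : γ ∈ Set.Ioo (0:ℝ) 1)
    (ℓ : S → A → ℝ) (hℓ : ∀ s a, 0 < ℓ s a)
    (p : S → A → S → ℝ)
    (hp0 : ∀ s a s', 0 ≤ p s a s') (hp1 : ∀ s a, ∑ s', p s a s' = 1)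
    (π : S → A → ℝ)
    (hπ0 : ∀ s a, 0 ≤ π s a) (hπ1 : ∀ s, ∑ a, π s a = 1)
    (H : (A → ℝ) → ℝ) (hH : ∀ μ, H μ = -∑ a, μ a * Real.log (μ a))
    (Q : S → A → ℝ)
    -- outcome-driven recursion with geometric q_T = p_T and uniform action prior
    (hQ : ∀ s a, Q s a = (1 - γ) * Real.log (ℓ s a)
        + γ * (∑ s', p s a s' * ((∑ a', π s' a' * Q s' a') + H (π s')))
        - γ * Real.log (Fintype.card A : ℝ))
    (Qsoft : S → A → ℝ)
    (hQsoft : ∀ s a, Qsoft s a = Q s a + γ * Real.log (Fintype.card A : ℝ) / (1 - γ)) :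
    -- soft Bellman recursion with reward (1−γ)·log ℓ and discount γ
    ∀ s a, Qsoft s a = (1 - γ) * Real.log (ℓ s a)
        + γ * ∑ s', p s a s' * ((∑ a', π s' a' * Qsoft s' a') + H (π s')) := by
  intro s a
  set c : ℝ := γ * Real.log (Fintype.card A : ℝ) / (1 - γ) with hc
  have hne : (1 - γ) ≠ 0 := by
    have := hγ.2; intro h; linarith
  have hcc : c * (1 - γ) = γ * Real.log (Fintype.card A : ℝ) := by
    rw [hc, div_mul_cancel₀ _ hne]
  have key : ∀ s', (∑ a', π s' a' * Qsoft s' a') = (∑ a', π s' a' * Q s' a') + c := by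
    intro s'
    simp only [hQsoft, mul_add, Finset.sum_add_distrib, ← Finset.sum_mul, hπ1, one_mul]
  have expand : (∑ s', p s a s' * ((∑ a', π s' a' * Qsoft s' a') + H (π s')))
      = (∑ s', p s a s' * ((∑ a', π s' a' * Q s' a') + H (π s'))) + c := by
    have : ∀ s', p s a s' * ((∑ a', π s' a' * Qsoft s' a') + H (π s'))
        = p s a s' * ((∑ a', π s' a' * Q s' a') + H (π s')) + p s a s' * c := by
      intro s'; rw [key]; ring
    rw [Finset.sum_congr rfl (fun s' _ => this s'), Finset.sum_add_distrib,
      ← Finset.sum_mul, hp1, one_mul]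
  rw [hQsoft, hQ, expand]
  have : γ * Real.log (Fintype.card A : ℝ) = c * (1 - γ) := hcc.symm
  rw [this]; ring
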